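/- Let $X$ be an integral Noetherian scheme with normalization $\nu: X^\nu \to X$ a finite birational morphism. If the natural map $\mathcal{O}_X \to \nu_* \mathcal{O}_{X^\nu}$ splits as a map of $\mathcal{O}_X$-modules, then it is an isomorphism, and hence $X$ is normal. -/

import Mathlib

open AlgebraicGeometry CategoryTheory TopologicalSpace

lemma isIntegrallyClosed_of_ringEquiv {R S : Type*} [CommRing R] [CommRing S]
    [IsDomain R] [IsDomain S] (e : R ≃+* S) (h : IsIntegrallyClosed S) :
    IsIntegrallyClosed R := by
  have H : (nonZeroDivisors R).map (e : R ≃* S).toMonoidHom = nonZeroDivisors S := by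
    ext a
    simp only [Submonoid.mem_map, mem_nonZeroDivisors_iff_ne_zero]
    constructor
    · rintro ⟨b, hb, rfl⟩
      simpa using hb
    · intro ha
      exact ⟨e.symm a, fun h' => ha (by simpa using congrArg e h'), by simp⟩
  letI E := IsLocalization.ringEquivOfRingEquiv (FractionRing R) (FractionRing S) e H
  rw [isIntegrallyClosed_iff (FractionRing R)]
  intro x hx
  have hcomm : ∀ r : R, E (algebraMap R (FractionRing R) r) = algebraMap S (FractionRing S) (e r) :=
    fun r => IsLocalization.ringEquivOfRingEquiv_eq H r
  have hx' : IsIntegral S (E x) := by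
    obtain ⟨p, pm, hp⟩ := hx
    refine ⟨p.map (e : R →+* S), pm.map _, ?_⟩
    rw [Polynomial.eval₂_map]
    have hco : ((algebraMap S (FractionRing S)).comp (e : R →+* S) : R →+* FractionRing S)
        = (E : FractionRing R →+* FractionRing S).comp (algebraMap R (FractionRing R)) := by
      ext r
      exact (hcomm r).symm
    have h5 : Polynomial.eval₂
        ((E : FractionRing R →+* FractionRing S).comp (algebraMap R (FractionRing R)))
        ((E : FractionRing R →+* FractionRing S) x) p = 0 := by
      rw [← Polynomial.hom_eval₂, hp, map_zero]
    rw [hco]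
    simpa using h5
  obtain ⟨y, hy⟩ := IsIntegrallyClosed.isIntegral_iff.mp hx'
  refine ⟨e.symm y, ?_⟩
  apply E.injective
  rw [← hy, hcomm (e.symm y)]
  simp

/-- let `X` be an integral Noetherian scheme whose normalization
`ν : Xᵛ → X` is a finite birational morphism (e.g. `X` Nagata); here `Y = Xᵛ` is an
integral normal Noetherian scheme, `ν` is finite, maps the generic point to the generic
point, and is an isomorphism at the level of the local rings at generic points
(birational).  If the natural map `𝒪_X → ν_* 𝒪_{Xᵛ}` splits as a map of `𝒪_X`-modules —
i.e. there is a family of additive retractions `r U : Γ(Xᵛ, ν⁻¹U) → Γ(X, U)` which is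
`Γ(X, U)`-linear, compatible with restriction, and splits `ν^♯` — then the natural map is
an isomorphism, and hence `X` is normal (all its local rings are integrally closed). -/
theorem normal_of_splitting_of_normalization
    (X Y : Scheme) [IsIntegral X] [IsIntegral Y] [IsNoetherian X] [IsNoetherian Y]
    (ν : Y ⟶ X) [IsFinite ν]
    (hgen : ν.base (genericPoint Y) = genericPoint X)
    (hbir : IsIso (ν.stalkMap (genericPoint Y)))
    (hnorm : ∀ y : Y, IsIntegrallyClosed (Y.presheaf.stalk y))
    (r : ∀ U : X.Opens, Γ(Y, ν ⁻¹ᵁ U) →+ Γ(X, U))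
    (hlin : ∀ (U : X.Opens) (a : Γ(X, U)) (m : Γ(Y, ν ⁻¹ᵁ U)),
      r U (ν.app U a * m) = a * r U m)
    (hnat : ∀ (U V : X.Opens) (h : U ≤ V) (m : Γ(Y, ν ⁻¹ᵁ V)),
      r U (Y.presheaf.map ((Opens.map ν.base).map (homOfLE h)).op m) =
        X.presheaf.map (homOfLE h).op (r V m))
    (hsplit : ∀ (U : X.Opens) (a : Γ(X, U)), r U (ν.app U a) = a) :
    (∀ U : X.Opens, Function.Bijective (ν.app U)) ∧
      ∀ x : X, IsIntegrallyClosed (X.presheaf.stalk x) := by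
  have hinj : ∀ U : X.Opens, Function.Injective (ν.app U) := by
    intro U a b h
    have hb := hsplit U b
    rw [← h, hsplit U a] at hb
    exact hb
  have hsurj : ∀ U : X.Opens, Function.Surjective (ν.app U) := by
    intro U m
    refine ⟨r U m, ?_⟩
    by_cases hU : (U : Set X).Nonempty
    · -- the generic points
      have hηU : genericPoint X ∈ U :=
        ((genericPoint_spec X).mem_open_set_iff U.isOpen).mpr (by simpa using hU)
      set ξ := genericPoint Y with hξdef
      have hbU : ν.base ξ ∈ U := by rw [hgen]; exact hηU
      have hξU : ξ ∈ ν ⁻¹ᵁ U := hbU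
      haveI : IsIso (ν.stalkMap ξ) := hbir
      obtain ⟨t, ht⟩ : ∃ t, ν.stalkMap ξ t = Y.presheaf.germ (ν ⁻¹ᵁ U) ξ hξU m :=
        (ConcreteCategory.bijective_of_isIso (ν.stalkMap ξ)).2 _
      obtain ⟨W₀, hW₀, a₀, ha₀⟩ := TopCat.Presheaf.germ_exist X.presheaf (x := ν.base ξ) t
      set W : X.Opens := W₀ ⊓ U with hWdef
      have hW : ν.base ξ ∈ W := ⟨hW₀, hbU⟩
      have hWU : W ≤ U := inf_le_right
      set a : Γ(X, W) := X.presheaf.map (homOfLE (inf_le_left : W ≤ W₀)).op a₀ with hadef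
      have ha : X.presheaf.germ W (ν.base ξ) hW a = t := by
        rw [hadef, X.presheaf.germ_res_apply (homOfLE (inf_le_left : W ≤ W₀)) _ hW a₀]
        exact ha₀
      have hξW : ξ ∈ ν ⁻¹ᵁ W := hW
      set m' : Γ(Y, ν ⁻¹ᵁ W) :=
        Y.presheaf.map ((Opens.map ν.base).map (homOfLE hWU)).op m with hm'def
      have hm' : Y.presheaf.germ (ν ⁻¹ᵁ W) ξ hξW m' = Y.presheaf.germ (ν ⁻¹ᵁ U) ξ hξU m := by
        rw [hm'def, Y.presheaf.germ_res_apply ((Opens.map ν.base).map (homOfLE hWU)) _ hξW m]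
      have key : ν.app W a = m' := by
        apply germ_injective_of_isIntegral (X := Y) (U := ν ⁻¹ᵁ W) ξ hξW
        rw [← Scheme.Hom.germ_stalkMap_apply (f := ν) W ξ hW a, ha, ht, hm']
      have h3 : X.presheaf.germ U (ν.base ξ) hbU (r U m) = t := by
        have h4 := X.presheaf.germ_res_apply (homOfLE hWU) _ hW (r U m)
        rw [← h4, ← hnat W U hWU m, ← hm'def, ← key, hsplit W a, ha]
      apply germ_injective_of_isIntegral (X := Y) (U := ν ⁻¹ᵁ U) ξ hξU
      rw [← Scheme.Hom.germ_stalkMap_apply (f := ν) U ξ hbU (r U m), h3, ht]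
    · -- U = ⊥
      have hUb : U = ⊥ := by
        ext1
        simpa [Set.not_nonempty_iff_eq_empty] using hU
      subst hUb
      have hpre : ν ⁻¹ᵁ (⊥ : X.Opens) = ⊥ := by
        ext1
        simp
      haveI : Subsingleton Γ(Y, ν ⁻¹ᵁ (⊥ : X.Opens)) := by
        rw [hpre]
        infer_instance
      exact Subsingleton.elim _ _
  -- ν is a closed immersion
  haveI hci : IsClosedImmersion ν := by
    rw [IsZariskiLocalAtTarget.iff_of_iSup_eq_top (P := @IsClosedImmersion) _
      (iSup_affineOpens_eq_top X)]
    intro U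
    haveI : IsAffine U.1.toScheme := U.2
    haveI : IsAffine (ν ⁻¹ᵁ U.1).toScheme := U.2.preimage ν
    apply IsClosedImmersion.of_surjective_of_isAffine
    rw [morphismRestrict_appTop]
    intro z
    obtain ⟨w, hw⟩ := (asIso (Y.presheaf.map
      (eqToHom (image_morphismRestrict_preimage ν U.1 ⊤)).op)).commRingCatIsoToRingEquiv.surjective z
    obtain ⟨v, hv⟩ := hsurj ((U.1).ι ''ᵁ ⊤) w
    refine ⟨v, ?_⟩
    show (Y.presheaf.map (eqToHom (image_morphismRestrict_preimage ν U.1 ⊤)).op)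
      ((Scheme.Hom.app ν ((U.1).ι ''ᵁ ⊤)) v) = z
    rw [hv]
    exact hw
  -- ν is surjective
  haveI hsν : Surjective ν := by
    constructor
    have hc : IsClosed (Set.range ν.base) := ν.isClosedEmbedding.isClosed_range
    have hdense : closure ({genericPoint X} : Set X) ⊆ Set.range ν.base := by
      rw [← hc.closure_eq]
      exact closure_mono (by simpa using ⟨genericPoint Y, hgen⟩)
    intro x
    have : x ∈ closure ({genericPoint X} : Set X) := by
      rw [(genericPoint_spec X).def]
      trivial
    exact hdense this
  haveI : IsIso ν := isIso_of_isClosedImmersion_of_surjective ν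
  refine ⟨fun U => ⟨hinj U, hsurj U⟩, fun x => ?_⟩
  obtain ⟨y, rfl⟩ := ν.surjective x
  haveI : IsDomain (X.presheaf.stalk (ν.base y)) :=
    Function.Injective.isDomain _
      (IsFractionRing.injective (X.presheaf.stalk (ν.base y)) X.functionField)
  haveI : IsDomain (Y.presheaf.stalk y) :=
    Function.Injective.isDomain _
      (IsFractionRing.injective (Y.presheaf.stalk y) Y.functionField)
  exact isIntegrallyClosed_of_ringEquiv
    (asIso (ν.stalkMap y)).commRingCatIsoToRingEquiv (hnorm y)
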